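/- arXiv:2005.03942 — 2 statements merged into one kernel-verified Lean document; each statement's English description precedes it below -/
import Mathlib

section
/- For permutation groups A on Ω₁ and B on Ω₂, the height of the product action of A × B on Ω₁ × Ω₂ satisfies H(A × B, Ω₁ × Ω₂) ≤ H(A, Ω₁) + H(B, Ω₂). -/
/-- The pointwise stabilizer of a set `Λ` in a group `G` acting on `Ω`. -/
def ptStab (G : Type*) [Group G] {Ω : Type*} [MulAction G Ω] (Λ : Set Ω) : Subgroup G :=
  ⨅ ω ∈ Λ, MulAction.stabilizer G ω

/-- `Λ` is an independent set: its pointwise stabilizer differs from that of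
every proper subset. -/
def IsIndep (G : Type*) [Group G] {Ω : Type*} [MulAction G Ω] (Λ : Set Ω) : Prop :=
  ∀ Δ : Set Ω, Δ ⊂ Λ → ptStab G Δ ≠ ptStab G Λ

/-- The height of `G` on `Ω`: the maximum size of an independent set. -/
noncomputable def height (G : Type*) [Group G] (Ω : Type*) [MulAction G Ω] : ℕ :=
  sSup {k | ∃ Λ : Set Ω, IsIndep G Λ ∧ Λ.ncard = k}

section ProductAction

variable {A B Ω₁ Ω₂ : Type*}

/-- The coordinatewise action of `A × B` on `Ω₁ × Ω₂`. -/
instance prodSMul [SMul A Ω₁] [SMul B Ω₂] : SMul (A × B) (Ω₁ × Ω₂) :=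
  ⟨fun g p => (g.1 • p.1, g.2 • p.2)⟩

instance prodMulAction [Monoid A] [Monoid B] [MulAction A Ω₁] [MulAction B Ω₂] :
    MulAction (A × B) (Ω₁ × Ω₂) where
  one_smul p := by
    show ((1 : A) • p.1, (1 : B) • p.2) = p
    simp
  mul_smul g h p := by
    show ((g.1 * h.1) • p.1, (g.2 * h.2) • p.2)
        = ((g.1 • h.1 • p.1), (g.2 • h.2 • p.2))
    simp [mul_smul]

end ProductAction

section Aux

lemma mem_ptStab {G : Type*} [Group G] {Ω : Type*} [MulAction G Ω] {Λ : Set Ω} {g : G} :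
    g ∈ ptStab G Λ ↔ ∀ ω ∈ Λ, g • ω = ω := by
  simp [ptStab, Subgroup.mem_iInf, MulAction.mem_stabilizer_iff]

lemma ptStab_antitone {G : Type*} [Group G] {Ω : Type*} [MulAction G Ω]
    {Δ Λ : Set Ω} (h : Δ ⊆ Λ) : ptStab G Λ ≤ ptStab G Δ := by
  intro g hg
  rw [mem_ptStab] at hg ⊢
  exact fun ω hω => hg ω (h hω)

lemma exists_indep_ptStab_eq_aux {G Ω : Type*} [Group G] [MulAction G Ω] [Finite Ω] :
    ∀ n (Λ : Set Ω), Λ.ncard = n → ∃ Δ, Δ ⊆ Λ ∧ IsIndep G Δ ∧ ptStab G Δ = ptStab G Λ := by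
  intro n
  induction n using Nat.strong_induction_on with
  | _ n ih =>
    intro Λ hn
    by_cases h : IsIndep G Λ
    · exact ⟨Λ, subset_rfl, h, rfl⟩
    · simp only [IsIndep, not_forall] at h
      obtain ⟨Δ, hsub, heq⟩ := h
      rw [not_ne_iff] at heq
      have hlt : Δ.ncard < n := hn ▸ Set.ncard_lt_ncard hsub (Set.toFinite Λ)
      obtain ⟨Δ', h1, h2, h3⟩ := ih Δ.ncard hlt Δ rfl
      exact ⟨Δ', h1.trans hsub.subset, h2, h3.trans heq⟩

lemma exists_indep_ptStab_eq {G Ω : Type*} [Group G] [MulAction G Ω] [Finite Ω]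
    (Λ : Set Ω) : ∃ Δ, Δ ⊆ Λ ∧ IsIndep G Δ ∧ ptStab G Δ = ptStab G Λ :=
  exists_indep_ptStab_eq_aux Λ.ncard Λ rfl

lemma ncard_le_height {G Ω : Type*} [Group G] [MulAction G Ω] [Finite Ω] {Λ : Set Ω}
    (h : IsIndep G Λ) : Λ.ncard ≤ height G Ω := by
  apply le_csSup
  · refine ⟨Nat.card Ω, fun k hk => ?_⟩
    obtain ⟨Γ, _, rfl⟩ := hk
    calc Γ.ncard ≤ (Set.univ : Set Ω).ncard :=
          Set.ncard_le_ncard (Set.subset_univ _) (Set.toFinite _)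
      _ = Nat.card Ω := Set.ncard_univ Ω
  · exact ⟨Λ, h, rfl⟩

@[simp] lemma prod_smul_def' {A B Ω₁ Ω₂ : Type*} [Group A] [Group B] [MulAction A Ω₁]
    [MulAction B Ω₂] (g : A × B) (p : Ω₁ × Ω₂) :
    g • p = (g.1 • p.1, g.2 • p.2) := rfl

lemma ptStab_prod {A B Ω₁ Ω₂ : Type*} [Group A] [Group B] [MulAction A Ω₁] [MulAction B Ω₂]
    (Λ : Set (Ω₁ × Ω₂)) :
    ptStab (A × B) Λ = (ptStab A (Prod.fst '' Λ)).prod (ptStab B (Prod.snd '' Λ)) := by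
  ext g
  simp only [Subgroup.mem_prod, mem_ptStab, Set.forall_mem_image, prod_smul_def', Prod.ext_iff]
  exact ⟨fun h => ⟨fun ω hω => (h ω hω).1, fun ω hω => (h ω hω).2⟩,
    fun ⟨h1, h2⟩ ω hω => ⟨h1 hω, h2 hω⟩⟩

lemma prod_eq_prod {A B : Type*} [Group A] [Group B] {S₁ S₂ : Subgroup A} {T₁ T₂ : Subgroup B}
    (h : S₁.prod T₁ = S₂.prod T₂) : S₁ = S₂ ∧ T₁ = T₂ := by
  constructor
  · ext x
    have := Subgroup.ext_iff.1 h (x, 1)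
    simp only [Subgroup.mem_prod, T₁.one_mem, T₂.one_mem, and_true] at this
    exact this
  · ext y
    have := Subgroup.ext_iff.1 h (1, y)
    simp only [Subgroup.mem_prod, S₁.one_mem, S₂.one_mem, true_and] at this
    exact this

end Aux

/-- `H(A × B, Ω₁ × Ω₂) ≤ H(A, Ω₁) + H(B, Ω₂)`. -/
theorem height_prod_le {A B Ω₁ Ω₂ : Type*} [Group A] [Group B]
    [Finite Ω₁] [Finite Ω₂] [MulAction A Ω₁] [MulAction B Ω₂]
    [FaithfulSMul A Ω₁] [FaithfulSMul B Ω₂] :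
    height (A × B) (Ω₁ × Ω₂) ≤ height A Ω₁ + height B Ω₂ := by
  apply csSup_le'
  rintro k ⟨Λ, hΛ, rfl⟩
  set ΛA := Prod.fst '' Λ with hΛA
  set ΛB := Prod.snd '' Λ with hΛB
  set S := ptStab A ΛA with hS
  set T := ptStab B ΛB with hT
  obtain ⟨ΔA, hΔAsub, hΔAind, hΔAeq⟩ := exists_indep_ptStab_eq (G := A) ΛA
  obtain ⟨ΔB, hΔBsub, hΔBind, hΔBeq⟩ := exists_indep_ptStab_eq (G := B) ΛB
  set NA := {x ∈ ΛA | ptStab A (ΛA \ {x}) ≠ S} with hNA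
  set NB := {y ∈ ΛB | ptStab B (ΛB \ {y}) ≠ T} with hNB
  have hNAsub : NA ⊆ ΔA := by
    intro x hx
    by_contra hxΔ
    have hsub : ΔA ⊆ ΛA \ {x} := fun z hz => ⟨hΔAsub hz, fun h => hxΔ (h ▸ hz)⟩
    have h1 : S ≤ ptStab A (ΛA \ {x}) := ptStab_antitone Set.diff_subset
    have h2 : ptStab A (ΛA \ {x}) ≤ ptStab A ΔA := ptStab_antitone hsub
    exact hx.2 (le_antisymm (h2.trans_eq hΔAeq) h1)
  have hNBsub : NB ⊆ ΔB := by
    intro y hy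
    by_contra hyΔ
    have hsub : ΔB ⊆ ΛB \ {y} := fun z hz => ⟨hΔBsub hz, fun h => hyΔ (h ▸ hz)⟩
    have h1 : T ≤ ptStab B (ΛB \ {y}) := ptStab_antitone Set.diff_subset
    have h2 : ptStab B (ΛB \ {y}) ≤ ptStab B ΔB := ptStab_antitone hsub
    exact hy.2 (le_antisymm (h2.trans_eq hΔBeq) h1)
  -- split Λ into two parts
  set Λ₁ := {p ∈ Λ | p.1 ∉ Prod.fst '' (Λ \ {p}) ∧ p.1 ∈ NA} with hΛ₁
  set Λ₂ := {p ∈ Λ | p.2 ∉ Prod.snd '' (Λ \ {p}) ∧ p.2 ∈ NB} with hΛ₂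
  have hcover : Λ ⊆ Λ₁ ∪ Λ₂ := by
    intro p hp
    have hne : ptStab (A × B) (Λ \ {p}) ≠ ptStab (A × B) Λ :=
      hΛ (Λ \ {p}) (Set.sdiff_singleton_ssubset.2 hp)
    rw [ptStab_prod, ptStab_prod] at hne
    have hcases : ptStab A (Prod.fst '' (Λ \ {p})) ≠ S ∨
        ptStab B (Prod.snd '' (Λ \ {p})) ≠ T := by
      by_contra hcon
      push_neg at hcon
      exact hne (by rw [hcon.1, hcon.2])
    rcases hcases with hA | hB
    · left
      have hnotmem : p.1 ∉ Prod.fst '' (Λ \ {p}) := by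
        intro hmem
        apply hA
        congr 1
        apply Set.Subset.antisymm
        · exact Set.image_mono Set.diff_subset
        · rintro x ⟨q, hq, rfl⟩
          by_cases hqp : q = p
          · exact hqp ▸ hmem
          · exact ⟨q, ⟨hq, hqp⟩, rfl⟩
      have himg : Prod.fst '' (Λ \ {p}) = ΛA \ {p.1} := by
        apply Set.Subset.antisymm
        · rintro x ⟨q, hq, rfl⟩
          exact ⟨⟨q, hq.1, rfl⟩, fun hx => hnotmem ⟨q, hq, hx⟩⟩
        · rintro x ⟨⟨q, hq, rfl⟩, hx⟩
          refine ⟨q, ⟨hq, fun hqp => hx ?_⟩, rfl⟩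
          simp only [Set.mem_singleton_iff] at hqp ⊢
          rw [hqp]
      refine ⟨hp, hnotmem, ⟨p, hp, rfl⟩, ?_⟩
      rw [← himg]
      exact hA
    · right
      have hnotmem : p.2 ∉ Prod.snd '' (Λ \ {p}) := by
        intro hmem
        apply hB
        congr 1
        apply Set.Subset.antisymm
        · exact Set.image_mono Set.diff_subset
        · rintro y ⟨q, hq, rfl⟩
          by_cases hqp : q = p
          · exact hqp ▸ hmem
          · exact ⟨q, ⟨hq, hqp⟩, rfl⟩
      have himg : Prod.snd '' (Λ \ {p}) = ΛB \ {p.2} := by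
        apply Set.Subset.antisymm
        · rintro y ⟨q, hq, rfl⟩
          exact ⟨⟨q, hq.1, rfl⟩, fun hy => hnotmem ⟨q, hq, hy⟩⟩
        · rintro y ⟨⟨q, hq, rfl⟩, hy⟩
          refine ⟨q, ⟨hq, fun hqp => hy ?_⟩, rfl⟩
          simp only [Set.mem_singleton_iff] at hqp ⊢
          rw [hqp]
      refine ⟨hp, hnotmem, ⟨p, hp, rfl⟩, ?_⟩
      rw [← himg]
      exact hB
  -- injectivity on Λ₁, Λ₂
  have hinj1 : Set.InjOn Prod.fst Λ₁ := by
    intro p hp q hq hpq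
    by_contra hne
    exact hp.2.1 ⟨q, ⟨hq.1, fun h => hne (Set.mem_singleton_iff.1 h).symm⟩, hpq.symm⟩
  have hinj2 : Set.InjOn Prod.snd Λ₂ := by
    intro p hp q hq hpq
    by_contra hne
    exact hp.2.1 ⟨q, ⟨hq.1, fun h => hne (Set.mem_singleton_iff.1 h).symm⟩, hpq.symm⟩
  have himg1 : Prod.fst '' Λ₁ ⊆ NA := by rintro x ⟨p, hp, rfl⟩; exact hp.2.2
  have himg2 : Prod.snd '' Λ₂ ⊆ NB := by rintro y ⟨p, hp, rfl⟩; exact hp.2.2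
  have hc1 : Λ₁.ncard ≤ NA.ncard := by
    rw [← Set.ncard_image_of_injOn hinj1]
    exact Set.ncard_le_ncard himg1 (Set.toFinite _)
  have hc2 : Λ₂.ncard ≤ NB.ncard := by
    rw [← Set.ncard_image_of_injOn hinj2]
    exact Set.ncard_le_ncard himg2 (Set.toFinite _)
  calc Λ.ncard ≤ (Λ₁ ∪ Λ₂).ncard := Set.ncard_le_ncard hcover (Set.toFinite _)
    _ ≤ Λ₁.ncard + Λ₂.ncard := Set.ncard_union_le _ _
    _ ≤ NA.ncard + NB.ncard := Nat.add_le_add hc1 hc2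
    _ ≤ ΔA.ncard + ΔB.ncard :=
        Nat.add_le_add (Set.ncard_le_ncard hNAsub (Set.toFinite _))
          (Set.ncard_le_ncard hNBsub (Set.toFinite _))
    _ ≤ height A Ω₁ + height B Ω₂ :=
        Nat.add_le_add (ncard_le_height hΔAind) (ncard_le_height hΔBind)
end

section
/- If a permutation group G on a finite set Ω of size t contains a regular normal subgroup, then every irredundant base of G has length at most log₂ t + 1, i.e. I(G) ≤ log₂ t + 1. -/
/-- The pointwise stabilizer of the first `i` points of the tuple `b`. -/
def prefixStab (G : Type*) [Group G] {Ω : Type*} [MulAction G Ω] {k : ℕ}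
    (b : Fin k → Ω) (i : ℕ) : Subgroup G :=
  ⨅ j : Fin k, ⨅ _ : (j : ℕ) < i, MulAction.stabilizer G (b j)

/-- `b` is an irredundant base: the chain of pointwise stabilizers of initial segments
is strictly decreasing and terminates at the trivial group. -/
def IsIrredBase (G : Type*) [Group G] {Ω : Type*} [MulAction G Ω] {k : ℕ}
    (b : Fin k → Ω) : Prop :=
  (∀ i : Fin k, prefixStab G b ((i : ℕ) + 1) < prefixStab G b (i : ℕ)) ∧
    prefixStab G b k = ⊥

/-- `I(G, Ω)`: the maximum length of an irredundant base. -/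
noncomputable def maxIrr (G : Type*) [Group G] (Ω : Type*) [MulAction G Ω] : ℕ :=
  sSup {k | ∃ b : Fin k → Ω, IsIrredBase G b}

lemma mem_prefixStab {G : Type*} [Group G] {Ω : Type*} [MulAction G Ω] {k : ℕ}
    {b : Fin k → Ω} {g : G} {i : ℕ} :
    g ∈ prefixStab G b i ↔ ∀ j : Fin k, (j : ℕ) < i → g • b j = b j := by
  simp [prefixStab, Subgroup.mem_iInf, MulAction.mem_stabilizer_iff]

lemma prefixStab_antitone {G : Type*} [Group G] {Ω : Type*} [MulAction G Ω] {k : ℕ}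
    {b : Fin k → Ω} : Antitone (prefixStab G b) := by
  intro i j hij
  intro g hg
  rw [mem_prefixStab] at *
  exact fun l hl => hg l (lt_of_lt_of_le hl hij)

lemma two_mul_card_le {G : Type*} [Group G] [Finite G] {H K : Subgroup G} (h : H < K) :
    2 * Nat.card H ≤ Nat.card K := by
  obtain ⟨m, hm⟩ := Subgroup.card_dvd_of_le h.le
  have hHpos : 0 < Nat.card H := Nat.card_pos
  have hne : Nat.card H ≠ Nat.card K := by
    intro he
    exact h.ne (Subgroup.eq_of_le_of_card_ge h.le he.ge)
  have hKpos : 0 < Nat.card K := Nat.card_pos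
  have hm2 : 2 ≤ m := by
    rcases Nat.lt_or_ge m 2 with h | h
    · interval_cases m
      · simp at hm; omega
      · simp at hm; exact absurd hm.symm hne
    · exact h
  calc 2 * Nat.card H ≤ Nat.card H * m := by nlinarith
    _ = Nat.card K := hm.symm

lemma key_bound {G Ω : Type*} [Group G] [Finite G] [Finite Ω]
    [MulAction G Ω] [FaithfulSMul G Ω] [MulAction.IsPretransitive G Ω]
    (N : Subgroup G) [N.Normal] [MulAction.IsPretransitive N Ω]
    (hreg : ∀ ω : Ω, MulAction.stabilizer N ω = ⊥)
    {k : ℕ} (b : Fin k → Ω) (hb : IsIrredBase G b) (hk : 0 < k) :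
    2 ^ (k - 1) ≤ Nat.card Ω := by
  -- freeness of the N-action
  have free : ∀ (n : G), n ∈ N → ∀ ω : Ω, n • ω = ω → n = 1 := by
    intro n hn ω hω
    have : (⟨n, hn⟩ : N) ∈ MulAction.stabilizer N ω := by
      rwa [MulAction.mem_stabilizer_iff, Subgroup.smul_def]
    rw [hreg ω, Subgroup.mem_bot] at this
    exact congrArg Subtype.val this
  have hNtrans : ∀ ω ω' : Ω, ∃ n : G, n ∈ N ∧ n • ω = ω' := by
    intro ω ω'
    obtain ⟨n, hn⟩ := MulAction.exists_smul_eq N ω ω'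
    exact ⟨(n : G), n.2, by rwa [Subgroup.smul_def] at hn⟩
  set ω₁ := b ⟨0, hk⟩ with hω₁
  -- card N = card Ω
  have hcard : Nat.card N = Nat.card Ω := by
    refine Nat.card_eq_of_bijective (fun n : N => (n : G) • ω₁) ⟨?_, ?_⟩
    · intro n m hnm
      have : ((m : G)⁻¹ * n) • ω₁ = ω₁ := by
        dsimp only at hnm
        rw [mul_smul, hnm, ← mul_smul, inv_mul_cancel, one_smul]
      have := free _ (mul_mem (inv_mem m.2) n.2) _ this
      ext
      rw [← mul_left_cancel_iff (a := (m : G)⁻¹), this, inv_mul_cancel]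
    · intro ω
      obtain ⟨n, hn, hnω⟩ := hNtrans ω₁ ω
      exact ⟨⟨n, hn⟩, hnω⟩
  set C : ℕ → Subgroup G := fun i => N ⊓ Subgroup.centralizer (prefixStab G b i : Set G)
    with hC
  -- membership criterion
  have memC : ∀ (i : ℕ) (n : G), n ∈ C i ↔ n ∈ N ∧ ∀ g ∈ prefixStab G b i, g * n * g⁻¹ = n := by
    intro i n
    simp only [hC, Subgroup.mem_inf, Subgroup.mem_centralizer_iff]
    constructor
    · rintro ⟨h1, h2⟩
      exact ⟨h1, fun g hg => by rw [h2 g hg]; group⟩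
    · rintro ⟨h1, h2⟩
      refine ⟨h1, fun g hg => ?_⟩
      have := h2 g hg
      calc g * n = (g * n * g⁻¹) * g := by group
        _ = n * g := by rw [this]
  -- translation between conjugation and action, for g fixing ω₁
  have conj_smul : ∀ (g n : G), g • ω₁ = ω₁ → (g * n * g⁻¹) • ω₁ = g • (n • ω₁) := by
    intro g n hg
    calc (g * n * g⁻¹) • ω₁ = g • n • g⁻¹ • ω₁ := by rw [← mul_smul, ← mul_smul]
      _ = g • (n • ω₁) := by
          rw [show g⁻¹ • ω₁ = ω₁ from inv_smul_eq_iff.mpr hg.symm]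
  have fix_ω₁ : ∀ (i : ℕ), 1 ≤ i → ∀ g ∈ prefixStab G b i, g • ω₁ = ω₁ := by
    intro i hi g hg
    exact mem_prefixStab.mp hg ⟨0, hk⟩ hi
  -- strict growth
  have hstep : ∀ i : Fin k, 1 ≤ (i : ℕ) → C i < C ((i : ℕ) + 1) := by
    intro i hi
    obtain ⟨n, hnN, hn⟩ := hNtrans ω₁ (b i)
    have hmono : C i ≤ C ((i : ℕ) + 1) := by
      intro x hx
      rw [memC] at *
      exact ⟨hx.1, fun g hg => hx.2 g (prefixStab_antitone (Nat.le_succ _) hg)⟩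
    refine lt_of_le_of_ne hmono (fun heq => ?_)
    -- n ∈ C (i+1)
    have hn1 : n ∈ C ((i : ℕ) + 1) := by
      rw [memC]
      refine ⟨hnN, fun g hg => ?_⟩
      have hg1 : g • ω₁ = ω₁ := fix_ω₁ _ (by omega) g hg
      have hgbi : g • b i = b i := mem_prefixStab.mp hg i (by omega)
      have : (g * n * g⁻¹) • ω₁ = n • ω₁ := by
        rw [conj_smul g n hg1, hn, hgbi, ← hn]
      have h2 : (n⁻¹ * (g * n * g⁻¹)) • ω₁ = ω₁ := by
        rw [mul_smul, this, ← mul_smul, inv_mul_cancel, one_smul]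
      have h3 := free _ (mul_mem (inv_mem hnN)
        ((‹N.Normal› : N.Normal).conj_mem n hnN g)) _ h2
      calc g * n * g⁻¹ = n * (n⁻¹ * (g * n * g⁻¹)) := by group
        _ = n := by rw [h3, mul_one]
    -- but n ∉ C i
    rw [← heq, memC] at hn1
    obtain ⟨g, hgi, hgi1⟩ := SetLike.exists_of_lt (hb.1 i)
    have hgbi : g • b i ≠ b i := by
      intro hfix
      apply hgi1
      rw [mem_prefixStab] at *
      intro j hj
      rcases Nat.lt_or_ge (j : ℕ) (i : ℕ) with h | h
      · exact hgi j h
      · have : j = i := Fin.ext (by omega)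
        rw [this]; exact hfix
    apply hgbi
    have hg1 : g • ω₁ = ω₁ := fix_ω₁ _ hi g hgi
    have := hn1.2 g hgi
    calc g • b i = g • (n • ω₁) := by rw [hn]
      _ = (g * n * g⁻¹) • ω₁ := (conj_smul g n hg1).symm
      _ = n • ω₁ := by rw [this]
      _ = b i := hn
  -- C k = N
  have hCk : C k = N := by
    apply le_antisymm inf_le_left
    intro n hn
    rw [memC]
    refine ⟨hn, fun g hg => ?_⟩
    rw [hb.2, Subgroup.mem_bot] at hg
    rw [hg]; group
  -- induction on chain
  have hchain : ∀ j : ℕ, 1 + j ≤ k → 2 ^ j * Nat.card (C 1) ≤ Nat.card (C (1 + j)) := by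
    intro j
    induction j with
    | zero => intro _; simp
    | succ m ih =>
      intro hmk
      have h1 := ih (by omega)
      have hlt : C (1 + m) < C (1 + m + 1) :=
        hstep ⟨1 + m, by omega⟩ (by simp)
      have h2 := two_mul_card_le hlt
      calc 2 ^ (m + 1) * Nat.card (C 1) = 2 * (2 ^ m * Nat.card (C 1)) := by ring
        _ ≤ 2 * Nat.card (C (1 + m)) := by omega
        _ ≤ Nat.card (C (1 + m + 1)) := h2
        _ = Nat.card (C (1 + (m + 1))) := by ring_nf
  have hfin := hchain (k - 1) (by omega)
  have hCpos : 0 < Nat.card (C 1) := Nat.card_pos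
  have : (1 : ℕ) + (k - 1) = k := by omega
  rw [this, hCk, hcard] at hfin
  calc 2 ^ (k - 1) = 2 ^ (k - 1) * 1 := by ring
    _ ≤ 2 ^ (k - 1) * Nat.card (C 1) := by exact Nat.mul_le_mul_left _ hCpos
    _ ≤ Nat.card Ω := hfin

/-- If `G` has a regular normal subgroup `N` (transitive with trivial point stabilizers),
then `I(G) ≤ log₂ t + 1` where `t = |Ω|`. -/
theorem maxIrr_le_of_regular_normal {G Ω : Type*} [Group G] [Finite G] [Finite Ω]
    [MulAction G Ω] [FaithfulSMul G Ω] [MulAction.IsPretransitive G Ω]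
    (N : Subgroup G) [N.Normal] [MulAction.IsPretransitive N Ω]
    (hreg : ∀ ω : Ω, MulAction.stabilizer N ω = ⊥) :
    (maxIrr G Ω : ℝ) ≤ Real.logb 2 (Nat.card Ω) + 1 := by
  set S : Set ℕ := {k | ∃ b : Fin k → Ω, IsIrredBase G b} with hS
  have hbdd : ∀ k ∈ S, k ≤ Nat.card Ω + 1 := by
    rintro k ⟨b, hb⟩
    rcases Nat.eq_zero_or_pos k with h0 | hpos
    · omega
    · have := key_bound N hreg b hb hpos
      have h2 : k - 1 < 2 ^ (k - 1) := Nat.lt_two_pow_self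
      omega
  have hRHS1 : (1 : ℝ) ≤ Real.logb 2 (Nat.card Ω) + 1 := by
    have : (0 : ℝ) ≤ Real.logb 2 (Nat.card Ω) := by
      rcases Nat.eq_zero_or_pos (Nat.card Ω) with h | h
      · simp [h]
      · apply Real.logb_nonneg one_lt_two
        exact_mod_cast h
    linarith
  rcases Set.eq_empty_or_nonempty S with hemp | hne
  · have : maxIrr G Ω = 0 := by
      show sSup S = 0
      rw [hemp, csSup_empty]
      rfl
    rw [this]
    simp only [Nat.cast_zero]
    linarith
  · have hmem : maxIrr G Ω ∈ S := by
      rw [maxIrr, ← hS]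
      exact Nat.sSup_mem hne ⟨Nat.card Ω + 1, hbdd⟩
    obtain ⟨b, hb⟩ := hmem
    generalize hgen : maxIrr G Ω = k at b hb ⊢
    clear hgen
    rcases Nat.eq_zero_or_pos k with h0 | hpos
    · rw [h0]
      simp only [Nat.cast_zero]
      linarith
    · have hkey := key_bound N hreg b hb hpos
      have hΩpos : 0 < Nat.card Ω := lt_of_lt_of_le (Nat.pow_pos (by norm_num)) hkey
      have hlog : (((k - 1 : ℕ) : ℝ)) ≤ Real.logb 2 (Nat.card Ω) := by
        rw [Real.le_logb_iff_rpow_le one_lt_two (by exact_mod_cast hΩpos),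
          Real.rpow_natCast]
        exact_mod_cast hkey
      have hk1 : ((k - 1 : ℕ) : ℝ) = (k : ℝ) - 1 := by
        have : (1 : ℕ) ≤ k := hpos
        push_cast [this]
        ring
      linarith [hk1 ▸ hlog]
end
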